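/- Let G_0, G_1, ..., G_m be any sequence of graphs on a finite vertex set V with G_0 the complete graph and each G_{i+1} obtained from G_i by deleting a single exposed edge e_i of G_i. Then there exists a metric d on V such that the same sequence G_0, G_1, ..., G_m is a sequence of d-erasures; for instance, for any ε with 0 < ε < 1/(m−1) (when m ≥ 2), the function d given by d(x,y) = 1 for edges xy of G_m and d(x,y) = 2 − jε when xy = e_j is such a metric. -/
import Mathlib


variable {V : Type*}

/-- A maximal clique of `G`: a clique not properly contained in any other clique. -/
def IsMaxClique (G : SimpleGraph V) (s : Set V) : Prop :=
  G.IsClique s ∧ ∀ t : Set V, G.IsClique t → s ⊆ t → t = s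

/-- `xy` is a facet edge of `G` if it is an edge and `{x, y}` is a maximal clique. -/
def IsFacetEdge (G : SimpleGraph V) (x y : V) : Prop :=
  G.Adj x y ∧ IsMaxClique G {x, y}

/-- `xy` is an exposed edge of `G` if it is an edge contained in a unique maximal
clique and it is not a facet edge. -/
def IsExposedEdge (G : SimpleGraph V) (x y : V) : Prop :=
  G.Adj x y ∧ (∃! s : Set V, IsMaxClique G s ∧ x ∈ s ∧ y ∈ s) ∧ ¬ IsFacetEdge G x y

/-- A graph is chordal if every cycle of length at least four has a chord, i.e. an
edge of the graph joining two vertices of the cycle which is not an edge of the cycle. -/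
def IsChordal (G : SimpleGraph V) : Prop :=
  ∀ ⦃v : V⦄ (w : G.Walk v v), w.IsCycle → 4 ≤ w.length →
    ∃ a b, a ∈ w.support ∧ b ∈ w.support ∧ G.Adj a b ∧ s(a, b) ∉ w.edges

/-- `H` is obtained from `G` through an erasure: deletion of a single exposed edge. -/
def Erasure (G H : SimpleGraph V) : Prop :=
  ∃ x y : V, IsExposedEdge G x y ∧ H = G.deleteEdges {s(x, y)}

/-- For any sequence of erasures `G₀, …, Gₘ` starting from the complete graph, with
`eⱼ = (x j)(y j)` the edge deleted at stage `j`, there is a metric `d` on `V` making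
the sequence a sequence of `d`-erasures; moreover, for any `0 < ε < 1/(m−1)`
(the latter condition imposed when `m ≥ 2`), the function assigning weight `1` to the
edges of `Gₘ` and `2 − jε` to `eⱼ` is such a metric. -/
theorem erasure_sequence_is_dErasure_sequence [Fintype V] (m : ℕ)
    (Gs : ℕ → SimpleGraph V) (x y : ℕ → V) (h0 : Gs 0 = ⊤)
    (hexp : ∀ i < m, IsExposedEdge (Gs i) (x i) (y i))
    (hdel : ∀ i < m, Gs (i + 1) = (Gs i).deleteEdges {s(x i, y i)}) :
    (∃ d : V → V → ℝ,
      (∀ a b, d a b = 0 ↔ a = b) ∧ (∀ a b, d a b = d b a) ∧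
      (∀ a b c, d a c ≤ d a b + d b c) ∧
      (∀ i < m, ∀ a b, IsExposedEdge (Gs i) a b → d a b ≤ d (x i) (y i))) ∧
    (∀ ε : ℝ, 0 < ε → (2 ≤ m → ε < 1 / ((m : ℝ) - 1)) →
      ∃ d : V → V → ℝ,
        (∀ a b, d a b = 0 ↔ a = b) ∧ (∀ a b, d a b = d b a) ∧
        (∀ a b c, d a c ≤ d a b + d b c) ∧
        (∀ a b, (Gs m).Adj a b → d a b = 1) ∧
        (∀ j < m, d (x j) (y j) = 2 - (j : ℝ) * ε) ∧
        (∀ i < m, ∀ a b, IsExposedEdge (Gs i) a b → d a b ≤ d (x i) (y i))) := by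
  
  classical
  have main : ∀ ε : ℝ, 0 < ε → (2 ≤ m → ε < 1 / ((m : ℝ) - 1)) →
      ∃ d : V → V → ℝ,
        (∀ a b, d a b = 0 ↔ a = b) ∧ (∀ a b, d a b = d b a) ∧
        (∀ a b c, d a c ≤ d a b + d b c) ∧
        (∀ a b, (Gs m).Adj a b → d a b = 1) ∧
        (∀ j < m, d (x j) (y j) = 2 - (j : ℝ) * ε) ∧
        (∀ i < m, ∀ a b, IsExposedEdge (Gs i) a b → d a b ≤ d (x i) (y i)) := by
    classical
    -- transfer adjacency along Sym2 equality
    have hadj_of_eq : ∀ (G : SimpleGraph V) (a b c e : V),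
        s(a, b) = s(c, e) → G.Adj a b → G.Adj c e := by
      intro G a b c e h hab
      rw [← SimpleGraph.mem_edgeSet, ← h, SimpleGraph.mem_edgeSet]
      exact hab
    -- monotonicity of the graph sequence
    have hle : ∀ k, k ≤ m → ∀ i, i ≤ k → Gs k ≤ Gs i := by
      intro k hk
      induction k with
      | zero =>
        intro i hi
        have : i = 0 := by omega
        subst this; exact le_refl _
      | succ n ih =>
        intro i hi
        have hsub : Gs (n + 1) ≤ Gs n := by
          rw [hdel n (by omega)]; exact SimpleGraph.deleteEdges_le _
        rcases Nat.lt_or_ge i (n + 1) with h | h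
        · exact hsub.trans (ih (by omega) i (by omega))
        · have : i = n + 1 := by omega
          subst this; exact le_refl _
    -- e_j is not an edge of Gs k for k > j
    have hnotadj : ∀ j < m, ∀ k, j < k → k ≤ m → ¬ (Gs k).Adj (x j) (y j) := by
      intro j hj k hjk hkm hadj
      have h1 : (Gs (j + 1)).Adj (x j) (y j) := hle k hkm (j + 1) (by omega) hadj
      rw [hdel j hj, SimpleGraph.deleteEdges_adj] at h1
      exact h1.2 rfl
    -- the deleted edges are pairwise distinct
    have hdistinct : ∀ j < m, ∀ k < m, s(x j, y j) = s(x k, y k) → j = k := by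
      intro j hj k hk heq
      by_contra hne
      rcases Nat.lt_or_ge j k with h | h
      · exact hnotadj j hj k h (by omega)
          (hadj_of_eq _ _ _ _ _ heq.symm (hexp k hk).1)
      · exact hnotadj k hk j (by omega) (by omega)
          (hadj_of_eq _ _ _ _ _ heq (hexp j hj).1)
    -- every non-edge of Gs m comes from some deleted edge
    have hcover : ∀ a b : V, a ≠ b → ¬ (Gs m).Adj a b → ∃ j < m, s(x j, y j) = s(a, b) := by
      intro a b hab
      have key : ∀ k, k ≤ m → ¬ (Gs k).Adj a b → ∃ j < k, s(x j, y j) = s(a, b) := by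
        intro k hk
        induction k with
        | zero =>
          intro h
          exact absurd (by rw [h0]; exact hab) h
        | succ n ih =>
          intro h
          rw [hdel n (by omega), SimpleGraph.deleteEdges_adj] at h
          push_neg at h
          by_cases hn : (Gs n).Adj a b
          · exact ⟨n, by omega, (Set.mem_singleton_iff.mp (h hn)).symm⟩
          · obtain ⟨j, hj, hje⟩ := ih (by omega) hn
            exact ⟨j, by omega, hje⟩
      exact key m le_rfl
    intro ε hε hε2
    -- j * ε < 1 for j < m
    have hje : ∀ j < m, (j : ℝ) * ε < 1 := by
      intro j hj
      rcases Nat.lt_or_ge m 2 with h | h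
      · have : j = 0 := by omega
        subst this; simp
      · have hεlt := hε2 h
        have hm2 : (2 : ℝ) ≤ (m : ℝ) := by exact_mod_cast h
        have hm1 : (0 : ℝ) < (m : ℝ) - 1 := by linarith
        have hjm : (j : ℝ) + 1 ≤ (m : ℝ) := by exact_mod_cast hj
        calc (j : ℝ) * ε ≤ ((m : ℝ) - 1) * ε :=
              mul_le_mul_of_nonneg_right (by linarith) hε.le
          _ < ((m : ℝ) - 1) * (1 / ((m : ℝ) - 1)) :=
              mul_lt_mul_of_pos_left hεlt hm1
          _ = 1 := by field_simp
    -- the metric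
    set D : V → V → ℝ := fun a b =>
      if a = b then 0
      else if (Gs m).Adj a b then 1
      else 2 - ((sInf {j | j < m ∧ s(x j, y j) = s(a, b)} : ℕ) : ℝ) * ε with hD
    -- value on non-edges
    have hDnon : ∀ a b : V, a ≠ b → ¬ (Gs m).Adj a b →
        ∃ j < m, s(x j, y j) = s(a, b) ∧ D a b = 2 - (j : ℝ) * ε := by
      intro a b hab hnadj
      obtain ⟨j0, hj0, hj0e⟩ := hcover a b hab hnadj
      have hne : {j | j < m ∧ s(x j, y j) = s(a, b)}.Nonempty := ⟨j0, hj0, hj0e⟩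
      have hmem := Nat.sInf_mem hne
      refine ⟨sInf {j | j < m ∧ s(x j, y j) = s(a, b)}, hmem.1, hmem.2, ?_⟩
      simp only [hD, if_neg hab, if_neg hnadj]
    -- bounds
    have hbound : ∀ a b : V, a ≠ b → 1 ≤ D a b ∧ D a b ≤ 2 := by
      intro a b hab
      by_cases hadj : (Gs m).Adj a b
      · simp only [hD, if_neg hab, if_pos hadj]; norm_num
      · obtain ⟨j, hj, -, hval⟩ := hDnon a b hab hadj
        rw [hval]
        have h1 := hje j hj
        have h2 : (0 : ℝ) ≤ (j : ℝ) * ε := by positivity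
        constructor <;> linarith
    have hDdiag : ∀ a : V, D a a = 0 := fun a => by simp [hD]
    -- value 2 - jε on e_j
    have hDej : ∀ j < m, D (x j) (y j) = 2 - (j : ℝ) * ε := by
      intro j hj
      have hab : x j ≠ y j := (hexp j hj).1.ne
      have hnadj : ¬ (Gs m).Adj (x j) (y j) := hnotadj j hj m hj le_rfl
      obtain ⟨k, hk, hke, hval⟩ := hDnon _ _ hab hnadj
      rw [hval, hdistinct k hk j hj hke]
    refine ⟨D, ?_, ?_, ?_, ?_, hDej, ?_⟩
    · -- d a b = 0 ↔ a = b
      intro a b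
      constructor
      · intro h
        by_contra hab
        have := (hbound a b hab).1
        linarith
      · rintro rfl; exact hDdiag a
    · -- symmetry
      intro a b
      by_cases hab : a = b
      · subst hab; rfl
      · have hab' : b ≠ a := fun h => hab h.symm
        by_cases hadj : (Gs m).Adj a b
        · simp only [hD, if_neg hab, if_neg hab', if_pos hadj, if_pos hadj.symm]
        · have hadj' : ¬ (Gs m).Adj b a := fun h => hadj h.symm
          simp only [hD, if_neg hab, if_neg hab', if_neg hadj, if_neg hadj']
          rw [Sym2.eq_swap]
    · -- triangle inequality
      intro a b c
      by_cases hac : a = c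
      · subst hac
        rcases eq_or_ne a b with rfl | hab
        · simp [hDdiag]
        · have h1 := (hbound a b hab).1
          have h2 := (hbound b a (fun h => hab h.symm)).1
          rw [hDdiag]; linarith
      · rcases eq_or_ne a b with rfl | hab
        · rw [hDdiag]; linarith [le_refl (D a c)]
        · rcases eq_or_ne b c with rfl | hbc
          · rw [hDdiag]; linarith [le_refl (D a b)]
          · have h1 := (hbound a c hac).2
            have h2 := (hbound a b hab).1
            have h3 := (hbound b c hbc).1
            linarith
    · -- value 1 on edges of Gs m
      intro a b hadj
      simp only [hD, if_neg hadj.ne, if_pos hadj]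
    · -- monotonicity
      intro i hi a b hexp'
      rw [hDej i hi]
      have hab : a ≠ b := hexp'.1.ne
      by_cases hadj : (Gs m).Adj a b
      · have : D a b = 1 := by simp only [hD, if_neg hab, if_pos hadj]
        rw [this]
        have := hje i hi
        linarith
      · obtain ⟨j, hj, hje', hval⟩ := hDnon a b hab hadj
        rw [hval]
        have hij : i ≤ j := by
          by_contra hlt
          push_neg at hlt
          exact hnotadj j hj i hlt (by omega)
            (hadj_of_eq _ _ _ _ _ hje'.symm hexp'.1)
        have : (i : ℝ) ≤ (j : ℝ) := by exact_mod_cast hij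
        nlinarith
  refine ⟨?_, main⟩
  have hεpos : (0 : ℝ) < 1 / (2 * (m : ℝ) + 2) := by positivity
  have hεsmall : 2 ≤ m → 1 / (2 * (m : ℝ) + 2) < 1 / ((m : ℝ) - 1) := by
    intro h
    have hm2 : (2 : ℝ) ≤ (m : ℝ) := by exact_mod_cast h
    apply one_div_lt_one_div_of_lt <;> linarith
  obtain ⟨d, h1, h2, h3, -, -, h6⟩ := main _ hεpos hεsmall
  exact ⟨d, h1, h2, h3, h6⟩
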